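/- Let p be a nice probability density on ℝ^d (spherically symmetric and nonincreasing in argument norm), and define Φ(r, x) = ∫_{B(x,r)} p(t) dt, the mass of p in the ball of radius r centered at x. Then Φ is nonincreasing in the norm of x: if ‖x₁‖₂ ≥ ‖x₂‖₂ then Φ(r, x₁) ≤ Φ(r, x₂). -/

import Mathlib

open MeasureTheory
open scoped RealInnerProductSpace

set_option maxHeartbeats 1000000 in
/-- For a nice density `p` (spherically symmetric and nonincreasing in argument norm),
the shifted CDF `Φ(r, x) = ∫_{B(x,r)} p` is nonincreasing in `‖x‖`. -/
theorem shiftedCDF_antitone_in_norm {d : ℕ}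
    (p : EuclideanSpace ℝ (Fin d) → ℝ)
    (hint : Integrable p) (hnonneg : ∀ x, 0 ≤ p x)
    (hprob : ∫ x, p x = 1)
    (hsym : ∀ x₁ x₂ : EuclideanSpace ℝ (Fin d), ‖x₁‖ = ‖x₂‖ → p x₁ = p x₂)
    (hdec : ∀ x₁ x₂ : EuclideanSpace ℝ (Fin d), ‖x₁‖ ≤ ‖x₂‖ → p x₂ ≤ p x₁)
    (r : ℝ) (x₁ x₂ : EuclideanSpace ℝ (Fin d)) (hx : ‖x₂‖ ≤ ‖x₁‖) :
    ∫ t in Metric.closedBall x₁ r, p t ≤ ∫ t in Metric.closedBall x₂ r, p t := by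
  classical
  by_cases hxx : x₁ = x₂
  · subst hxx; exact le_refl _
  set v : EuclideanSpace ℝ (Fin d) := x₁ - x₂ with hvdef
  have hvne : v ≠ 0 := sub_ne_zero.mpr hxx
  set m : EuclideanSpace ℝ (Fin d) := (2⁻¹ : ℝ) • (x₁ + x₂) with hmdef
  set R : EuclideanSpace ℝ (Fin d) ≃ₗᵢ[ℝ] EuclideanSpace ℝ (Fin d) :=
    Submodule.reflection (ℝ ∙ v) with hRdef
  set σ : EuclideanSpace ℝ (Fin d) → EuclideanSpace ℝ (Fin d) :=
    fun t => m - R (t - m) with hσdef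
  -- involutive
  have hσinv : Function.Involutive σ := by
    intro t
    simp only [hσdef]
    rw [sub_sub_cancel_left, map_neg, Submodule.reflection_reflection, sub_neg_eq_add]
    abel
  -- isometry-like property
  have hσdist : ∀ s t : EuclideanSpace ℝ (Fin d), dist (σ s) (σ t) = dist s t := by
    intro s t
    have h : σ s - σ t = R ((t - m) - (s - m)) := by
      rw [map_sub]
      simp only [hσdef]
      abel
    rw [dist_eq_norm, dist_eq_norm, h, LinearIsometryEquiv.norm_map,
      show (t - m) - (s - m) = t - s by abel, norm_sub_rev]
  -- σ swaps x₁ and x₂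
  have hRv : ∀ c : ℝ, R (c • v) = c • v := fun c =>
    Submodule.reflection_mem_subspace_eq_self
      (Submodule.smul_mem _ c (Submodule.mem_span_singleton_self v))
  have hσx₂ : σ x₂ = x₁ := by
    have h1 : x₂ - m = (-(2⁻¹ : ℝ)) • v := by
      simp only [hvdef, hmdef]
      module
    simp only [hσdef]
    rw [h1, hRv]
    simp only [hvdef, hmdef]
    module
  have hσx₁ : σ x₁ = x₂ := by
    conv_lhs => rw [← hσx₂]
    exact hσinv x₂
  -- preimages of balls
  have hpre₁ : σ ⁻¹' (Metric.closedBall x₁ r) = Metric.closedBall x₂ r := by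
    ext t
    simp only [Set.mem_preimage, Metric.mem_closedBall]
    rw [← hσx₂, hσdist]
  have hpre₂ : σ ⁻¹' (Metric.closedBall x₂ r) = Metric.closedBall x₁ r := by
    ext t
    simp only [Set.mem_preimage, Metric.mem_closedBall]
    rw [← hσx₁, hσdist]
  -- measure preserving
  have hσmp : MeasurePreserving σ
      (volume : Measure (EuclideanSpace ℝ (Fin d))) volume := by
    have h1 : MeasurePreserving (fun t : EuclideanSpace ℝ (Fin d) => t + (-m))
        volume volume := measurePreserving_add_right volume (-m)
    have h2 : MeasurePreserving (R : EuclideanSpace ℝ (Fin d) → EuclideanSpace ℝ (Fin d))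
        volume volume := R.measurePreserving
    have h3 : MeasurePreserving (fun y : EuclideanSpace ℝ (Fin d) => -y)
        volume volume := Measure.measurePreserving_neg volume
    have h4 : MeasurePreserving (fun y : EuclideanSpace ℝ (Fin d) => m + y)
        volume volume := measurePreserving_add_left volume m
    have hcomp : σ = (fun y : EuclideanSpace ℝ (Fin d) => m + y) ∘
        (fun y : EuclideanSpace ℝ (Fin d) => -y) ∘
        (R : EuclideanSpace ℝ (Fin d) → EuclideanSpace ℝ (Fin d)) ∘
        (fun t : EuclideanSpace ℝ (Fin d) => t + (-m)) := by
      funext t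
      simp only [hσdef, Function.comp_apply, sub_eq_add_neg]
    rw [hcomp]
    exact h4.comp (h3.comp (h2.comp h1))
  have hσmeas : Measurable σ := hσmp.measurable
  have hσemb : MeasurableEmbedding σ :=
    (MeasurableEquiv.mk (Function.Involutive.toPerm σ hσinv) hσmeas hσmeas).measurableEmbedding
  -- key norm inequality
  have hvm : (0:ℝ) ≤ ⟪v, m⟫ := by
    have h1 : ⟪v, m⟫ = 2⁻¹ * (‖x₁‖ ^ 2 - ‖x₂‖ ^ 2) := by
      simp only [hvdef, hmdef, real_inner_smul_right, inner_sub_left, inner_add_right,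
        real_inner_self_eq_norm_sq, real_inner_comm x₂ x₁]
      ring
    rw [h1]
    have h2 : ‖x₂‖ ^ 2 ≤ ‖x₁‖ ^ 2 := by
      have := norm_nonneg x₂
      nlinarith
    linarith
  have key : ∀ s : EuclideanSpace ℝ (Fin d), ⟪v, s - m⟫ ≤ 0 → ‖s‖ ≤ ‖σ s‖ := by
    intro s hs
    have hv2 : (0:ℝ) < ‖v‖ ^ 2 := pow_pos (norm_pos_iff.mpr hvne) 2
    set c : ℝ := ⟪v, s - m⟫ / ‖v‖ ^ 2 with hcdef
    have hcneg : c ≤ 0 := by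
      rw [hcdef]
      exact div_nonpos_of_nonpos_of_nonneg hs hv2.le
    have hc : c * ‖v‖ ^ 2 = ⟪v, s⟫ - ⟪v, m⟫ := by
      rw [hcdef, div_mul_cancel₀ _ (ne_of_gt hv2), inner_sub_right]
    have hσs : σ s = s - (2 * c) • v := by
      simp only [hσdef]
      rw [hRdef, Submodule.reflection_singleton_apply]
      simp only [RCLike.ofReal_real_eq_id, id_eq]
      rw [two_smul, hcdef]
      module
    have hsq : ‖s‖ ^ 2 ≤ ‖σ s‖ ^ 2 := by
      have hexp : ‖σ s‖ ^ 2 = ‖s‖ ^ 2 - 2 * (2 * c) * ⟪v, s⟫ + (2 * c) ^ 2 * ‖v‖ ^ 2 := by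
        rw [hσs, norm_sub_sq_real, real_inner_smul_right, norm_smul, mul_pow,
          Real.norm_eq_abs, sq_abs, real_inner_comm s v]
        ring
      have h2 : (2 * c) ^ 2 * ‖v‖ ^ 2 = 4 * c * (⟪v, s⟫ - ⟪v, m⟫) := by
        rw [← hc]; ring
      have h3 : 0 ≤ -c * ⟪v, m⟫ := mul_nonneg (neg_nonneg.mpr hcneg) hvm
      nlinarith [hexp, h2, h3]
    exact le_of_pow_le_pow_left₀ (by norm_num) (norm_nonneg _) hsq
  -- pointwise inequality on B₂ \ B₁
  have hpoint : ∀ s ∈ Metric.closedBall x₂ r \ Metric.closedBall x₁ r, p (σ s) ≤ p s := by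
    rintro s ⟨hs₂, hs₁⟩
    rw [Metric.mem_closedBall] at hs₂
    simp only [Metric.mem_closedBall, not_le] at hs₁
    have hdist : ‖s - x₂‖ < ‖s - x₁‖ := by
      rw [dist_eq_norm] at hs₂ hs₁
      linarith
    have hinner : ⟪v, s - m⟫ ≤ 0 := by
      have hsq : ‖s - x₂‖ ^ 2 < ‖s - x₁‖ ^ 2 := by
        have h0 : (0:ℝ) ≤ ‖s - x₂‖ := norm_nonneg _
        nlinarith
      have e1 : ‖s - x₁‖ ^ 2 = ‖s‖ ^ 2 - 2 * ⟪s, x₁⟫ + ‖x₁‖ ^ 2 := norm_sub_sq_real s x₁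
      have e2 : ‖s - x₂‖ ^ 2 = ‖s‖ ^ 2 - 2 * ⟪s, x₂⟫ + ‖x₂‖ ^ 2 := norm_sub_sq_real s x₂
      have e3 : ⟪v, s - m⟫ = ⟪s, x₁⟫ - ⟪s, x₂⟫
          - 2⁻¹ * (‖x₁‖ ^ 2 - ‖x₂‖ ^ 2) := by
        simp only [hvdef, hmdef, inner_sub_left, inner_sub_right, real_inner_smul_right,
          inner_add_right, real_inner_self_eq_norm_sq, real_inner_comm x₁ s,
          real_inner_comm x₂ s, real_inner_comm x₂ x₁]
        ring
      rw [e1, e2] at hsq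
      rw [e3]
      linarith
    exact hdec s (σ s) (key s hinner)
  -- change of variables
  have hcov : ∀ A : Set (EuclideanSpace ℝ (Fin d)),
      ∫ t in σ ⁻¹' A, p (σ t) = ∫ t in A, p t := fun A =>
    hσmp.setIntegral_preimage_emb hσemb p A
  have step1 : ∫ t in Metric.closedBall x₁ r, p t
      = ∫ t in Metric.closedBall x₂ r, p (σ t) := by
    rw [← hcov (Metric.closedBall x₁ r), hpre₁]
  -- split B₂ into (B₂ ∩ B₁) and (B₂ \ B₁)
  set B₁ := Metric.closedBall x₁ r with hB₁def
  set B₂ := Metric.closedBall x₂ r with hB₂def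
  have hmB₁ : MeasurableSet B₁ := measurableSet_closedBall
  have hmB₂ : MeasurableSet B₂ := measurableSet_closedBall
  have hpσint : Integrable (fun t => p (σ t)) volume :=
    (hσmp.integrable_comp_emb hσemb).mpr hint
  have hsplit : B₂ ∩ B₁ ∪ B₂ \ B₁ = B₂ := Set.inter_union_diff B₂ B₁
  have hdisj : Disjoint (B₂ ∩ B₁) (B₂ \ B₁) :=
    Set.disjoint_of_subset_left Set.inter_subset_right Set.disjoint_sdiff_right
  have hsum : ∀ f : EuclideanSpace ℝ (Fin d) → ℝ, Integrable f volume →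
      ∫ t in B₂, f t = (∫ t in B₂ ∩ B₁, f t) + ∫ t in B₂ \ B₁, f t := by
    intro f hf
    conv_lhs => rw [← hsplit]
    exact setIntegral_union hdisj (hmB₂.diff hmB₁) hf.integrableOn hf.integrableOn
  have hcap : ∫ t in B₂ ∩ B₁, p (σ t) = ∫ t in B₂ ∩ B₁, p t := by
    have hprecap : σ ⁻¹' (B₂ ∩ B₁) = B₂ ∩ B₁ := by
      rw [Set.preimage_inter, hpre₁, hpre₂, Set.inter_comm]
    conv_lhs => rw [← hprecap]
    rw [hcov]
  have hdiff : ∫ t in B₂ \ B₁, p (σ t) ≤ ∫ t in B₂ \ B₁, p t :=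
    setIntegral_mono_on hpσint.integrableOn hint.integrableOn (hmB₂.diff hmB₁) hpoint
  calc ∫ t in B₁, p t = ∫ t in B₂, p (σ t) := step1
    _ = (∫ t in B₂ ∩ B₁, p (σ t)) + ∫ t in B₂ \ B₁, p (σ t) := hsum _ hpσint
    _ ≤ (∫ t in B₂ ∩ B₁, p t) + ∫ t in B₂ \ B₁, p t := by
        rw [hcap]; exact add_le_add_right hdiff _
    _ = ∫ t in B₂, p t := (hsum _ hint).symm
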